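/- Let u : ℝ³ → ℍ be differentiable at x with |u(y)| = 1 for every y, let φ : ℝ³ → ℍ be differentiable at x, set ψ(y) = u(y)·φ(y)·u(y)* and a(v) = u(x)*·Du(x)v, and write D_aφ(v) = Dφ(x)v + a(v)·φ(x) − φ(x)·a(v). Then for all v, w ∈ ℝ³: |Dψ(x)v| = |D_aφ(v)| and |Dψ(x)v · Dψ(x)w − Dψ(x)w · Dψ(x)v| = |D_aφ(v) · D_aφ(w) − D_aφ(w) · D_aφ(v)|. (Hence the Faddeev energy densities of ψ and of the pair (a, φ) agree pointwise, giving E(ψ) = E_φ[a].) -/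

import Mathlib

open Quaternion

/-- Quaternionic conjugation as a continuous `ℝ`-linear map. -/
noncomputable def starCLM : ℍ[ℝ] →L[ℝ] ℍ[ℝ] :=
  LinearMap.mkContinuous
    { toFun := star
      map_add' := star_add
      map_smul' := fun r a => by simp }
    1 (fun a => by simp [Quaternion.norm_star])

@[simp] lemma starCLM_apply (q : ℍ[ℝ]) : starCLM q = star q := rfl

/-- For `u : ℝ³ → ℍ` of unit norm and `φ : ℝ³ → ℍ`, both differentiable at `x`,
with `ψ = u φ u*`, `a(v) = u(x)* Du(x)v`, and
`D_aφ(v) = Dφ(x)v + a(v)φ(x) − φ(x)a(v)`, one has `|Dψ(x)v| = |D_aφ(v)|` and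
`|Dψ(x)v·Dψ(x)w − Dψ(x)w·Dψ(x)v| = |D_aφ(v)·D_aφ(w) − D_aφ(w)·D_aφ(v)|`:
the Faddeev energy densities of `ψ` and of `(a, φ)` agree pointwise, giving
`E(ψ) = E_φ[a]`. -/
theorem energy_density_identity (u φ : EuclideanSpace ℝ (Fin 3) → ℍ[ℝ])
    (x : EuclideanSpace ℝ (Fin 3))
    (hu : DifferentiableAt ℝ u x) (hφ : DifferentiableAt ℝ φ x)
    (h_unit : ∀ y, ‖u y‖ = 1)
    (ψ : EuclideanSpace ℝ (Fin 3) → ℍ[ℝ])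
    (hψ : ψ = fun y => u y * φ y * star (u y))
    (a : EuclideanSpace ℝ (Fin 3) → ℍ[ℝ])
    (ha : a = fun v => star (u x) * fderiv ℝ u x v)
    (Daφ : EuclideanSpace ℝ (Fin 3) → ℍ[ℝ])
    (hDaφ : Daφ = fun v => fderiv ℝ φ x v + a v * φ x - φ x * a v)
    (v w : EuclideanSpace ℝ (Fin 3)) :
    ‖fderiv ℝ ψ x v‖ = ‖Daφ v‖ ∧
    ‖fderiv ℝ ψ x v * fderiv ℝ ψ x w - fderiv ℝ ψ x w * fderiv ℝ ψ x v‖ =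
      ‖Daφ v * Daφ w - Daφ w * Daφ v‖ := by
  subst hψ ha hDaφ
  set U := u x with hUdef
  set D := fderiv ℝ u x with hDdef
  set P := fderiv ℝ φ x with hPdef
  have hnorm : ‖U‖ = 1 := h_unit x
  have hnormSq : (normSq U : ℝ) = 1 := by
    have := Quaternion.normSq_eq_norm_mul_self (a := U)
    rw [hnorm] at this
    simpa using this
  have hUsU : star U * U = 1 := by
    rw [Quaternion.star_mul_self, hnormSq]; norm_num
  have hUUs : U * star U = 1 := by
    rw [Quaternion.self_mul_star, hnormSq]; norm_num
  -- derivative of star ∘ u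
  have hstar : HasFDerivAt (fun y => star (u y)) (starCLM ∘L D) x :=
    starCLM.hasFDerivAt.comp x hu.hasFDerivAt
  -- u y * star (u y) is constant 1
  have hconst : HasFDerivAt (fun y => u y * star (u y)) (0 : EuclideanSpace ℝ (Fin 3) →L[ℝ] ℍ[ℝ]) x := by
    have : (fun y : EuclideanSpace ℝ (Fin 3) => u y * star (u y)) = fun _ => (1 : ℍ[ℝ]) := by
      funext y
      rw [Quaternion.self_mul_star]
      have := Quaternion.normSq_eq_norm_mul_self (a := u y)
      rw [h_unit y] at this
      simp [this]
    rw [this]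
    exact hasFDerivAt_const 1 x
  have hprod := hu.hasFDerivAt.mul' hstar
  have hzero := hconst.unique hprod
  have hrel : ∀ z, U * star (D z) + D z * star U = 0 := by
    intro z
    have := congrArg (fun L : EuclideanSpace ℝ (Fin 3) →L[ℝ] ℍ[ℝ] => L z) hzero.symm
    simpa [ContinuousLinearMap.smul_apply, ContinuousLinearMap.smulRight_apply, smul_eq_mul] using this
  have hstarD : ∀ z, star (D z) = -(star U * D z * star U) := by
    intro z
    have h3 : star (D z) + star U * D z * star U = 0 := by
      calc star (D z) + star U * D z * star U
          = star U * U * star (D z) + star U * D z * star U := by rw [hUsU, one_mul]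
        _ = star U * (U * star (D z) + D z * star U) := by noncomm_ring
        _ = 0 := by rw [hrel z, mul_zero]
    exact eq_neg_of_add_eq_zero_left h3
  -- derivative of ψ
  have hψd := (hu.hasFDerivAt.mul' hφ.hasFDerivAt).mul' hstar
  have key : ∀ z, fderiv ℝ (fun y => u y * φ y * star (u y)) x z
      = U * (P z + star U * D z * φ x - φ x * (star U * D z)) * star U := by
    intro z
    rw [show (fun y => u y * φ y * star (u y)) = (u * φ * fun y => star (u y)) from rfl, hψd.fderiv]
    simp only [ContinuousLinearMap.add_apply, ContinuousLinearMap.smul_apply,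
      ContinuousLinearMap.smulRight_apply, ContinuousLinearMap.comp_apply,
      starCLM_apply, smul_eq_mul, Pi.mul_apply, op_smul_eq_mul]
    rw [hstarD z]
    have expand : U * (P z + star U * D z * φ x - φ x * (star U * D z)) * star U
        = U * P z * star U + (U * star U) * (D z * (φ x * star U))
          - U * (φ x * (star U * D z)) * star U := by noncomm_ring
    rw [expand, hUUs, one_mul]
    noncomm_ring
  have conj_norm : ∀ q : ℍ[ℝ], ‖U * q * star U‖ = ‖q‖ := by
    intro q
    have hsU : ‖star U‖ = 1 := by rw [Quaternion.norm_star]; exact hnorm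
    rw [norm_mul, norm_mul, hnorm, hsU, one_mul, mul_one]
  have conj_mul : ∀ p q : ℍ[ℝ], (U * p * star U) * (U * q * star U) = U * (p * q) * star U := by
    intro p q
    calc (U * p * star U) * (U * q * star U) = U * p * (star U * U) * q * star U := by noncomm_ring
      _ = U * (p * q) * star U := by rw [hUsU, mul_one]; noncomm_ring
  set A := P v + star U * D v * φ x - φ x * (star U * D v) with hA
  set B := P w + star U * D w * φ x - φ x * (star U * D w) with hB
  constructor
  · rw [key v, conj_norm]
  · rw [key v, key w, conj_mul, conj_mul, ← sub_mul, ← mul_sub, conj_norm]
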